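/- Let A, B ∈ SU(2,1), and set x = tr(A), y = tr(B), z = tr(AB), t = tr(AB⁻¹). Then tr(ABA⁻¹B⁻¹) + conj(tr(ABA⁻¹B⁻¹)) = |x|²|y|² + |x|² + |y|² + |z|² + |t|² − 2·Re(x·y·conj(z)) − 2·Re(conj(x)·y·t) − 3; equivalently, 2·Re(tr(ABA⁻¹B⁻¹)) equals this expression. -/

import Mathlib

open Matrix

/-- The matrix `J = diag(1,1,-1)`. -/
def Jmat : Matrix (Fin 3) (Fin 3) ℂ := Matrix.diagonal ![1, 1, -1]

/-- `A ∈ SU(2,1)`: `det A = 1` and `Aᴴ J A = J` (equivalently `A⁻¹ = J Aᴴ J`). -/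
def IsSU21 (A : Matrix (Fin 3) (Fin 3) ℂ) : Prop :=
  A.det = 1 ∧ Aᴴ * Jmat * A = Jmat

lemma key_poly (A B : Matrix (Fin 3) (Fin 3) ℂ) :
    (A * B * A.adjugate * B.adjugate).trace + (B * A * B.adjugate * A.adjugate).trace =
      A.trace * A.adjugate.trace * B.trace * B.adjugate.trace
      + B.det * (A.trace * A.adjugate.trace) + A.det * (B.trace * B.adjugate.trace)
      + (A * B).trace * (B.adjugate * A.adjugate).trace
      + (A * B.adjugate).trace * (B * A.adjugate).trace
      - A.trace * B.trace * (B.adjugate * A.adjugate).trace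
      - A.adjugate.trace * B.adjugate.trace * (A * B).trace
      - A.adjugate.trace * B.trace * (A * B.adjugate).trace
      - A.trace * B.adjugate.trace * (B * A.adjugate).trace
      - 3 * (A.det * B.det) := by
  simp only [Matrix.trace_fin_three, Matrix.mul_apply, Matrix.adjugate_fin_three,
    Matrix.det_fin_three, Fin.sum_univ_three, Matrix.cons_val', Matrix.cons_val_zero,
    Matrix.cons_val_one, Matrix.head_cons, Matrix.empty_val', Matrix.cons_val_fin_one,
    Matrix.head_fin_const, Matrix.cons_val_two, Matrix.tail_cons, Matrix.of_apply]
  ring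

lemma Jmat_mul_Jmat : Jmat * Jmat = 1 := by
  ext i j
  fin_cases i <;> fin_cases j <;>
    simp [Jmat, Matrix.mul_apply, Fin.sum_univ_three, Matrix.one_apply]

lemma U_isUnit {M : Matrix (Fin 3) (Fin 3) ℂ} (h : Mᴴ * Jmat * M = Jmat) :
    IsUnit M.det := by
  have h1 : (Jmat * Mᴴ * Jmat) * M = 1 := by
    calc (Jmat * Mᴴ * Jmat) * M = Jmat * (Mᴴ * Jmat * M) := by
          rw [Matrix.mul_assoc, Matrix.mul_assoc, Matrix.mul_assoc]
      _ = 1 := by rw [h, Jmat_mul_Jmat]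
  have := Matrix.det_mul (Jmat * Mᴴ * Jmat) M
  rw [h1, Matrix.det_one] at this
  exact IsUnit.of_mul_eq_one _ (by rw [mul_comm]; exact this.symm)

lemma U_inv_eq {M : Matrix (Fin 3) (Fin 3) ℂ} (h : Mᴴ * Jmat * M = Jmat) :
    M⁻¹ = Jmat * Mᴴ * Jmat := by
  apply Matrix.inv_eq_left_inv
  calc (Jmat * Mᴴ * Jmat) * M = Jmat * (Mᴴ * Jmat * M) := by
        rw [Matrix.mul_assoc, Matrix.mul_assoc, Matrix.mul_assoc]
    _ = 1 := by rw [h, Jmat_mul_Jmat]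

lemma U_trace_inv {M : Matrix (Fin 3) (Fin 3) ℂ} (h : Mᴴ * Jmat * M = Jmat) :
    M⁻¹.trace = (starRingEnd ℂ) M.trace := by
  rw [U_inv_eq h, Matrix.trace_mul_cycle, Jmat_mul_Jmat, Matrix.one_mul,
    Matrix.trace_conjTranspose]
  rfl

lemma U_mul {M N : Matrix (Fin 3) (Fin 3) ℂ} (hM : Mᴴ * Jmat * M = Jmat)
    (hN : Nᴴ * Jmat * N = Jmat) : (M * N)ᴴ * Jmat * (M * N) = Jmat := by
  rw [Matrix.conjTranspose_mul]
  calc Nᴴ * Mᴴ * Jmat * (M * N) = Nᴴ * (Mᴴ * Jmat * M) * N := by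
        simp only [Matrix.mul_assoc]
    _ = Jmat := by rw [hM, hN]

lemma Jmat_conjTranspose : Jmatᴴ = Jmat := by
  have h : (star ![1, 1, -1] : Fin 3 → ℂ) = ![1, 1, -1] := by
    funext i; fin_cases i <;> simp
  rw [Jmat, Matrix.diagonal_conjTranspose, h]

lemma U_inv {M : Matrix (Fin 3) (Fin 3) ℂ} (h : Mᴴ * Jmat * M = Jmat) :
    (M⁻¹)ᴴ * Jmat * M⁻¹ = Jmat := by
  have hu := U_isUnit h
  have huH : IsUnit Mᴴ.det := by
    rw [Matrix.det_conjTranspose]; exact hu.star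
  have e : (Mᴴ)⁻¹ * (Mᴴ * Jmat * M) * M⁻¹ = Jmat := by
    calc (Mᴴ)⁻¹ * (Mᴴ * Jmat * M) * M⁻¹
        = (Mᴴ)⁻¹ * (Mᴴ * (Jmat * (M * M⁻¹))) := by simp only [Matrix.mul_assoc]
      _ = (Mᴴ)⁻¹ * Mᴴ * Jmat := by
          rw [Matrix.mul_nonsing_inv _ hu, Matrix.mul_one]
          simp only [Matrix.mul_assoc]
      _ = Jmat := by rw [Matrix.nonsing_inv_mul _ huH, Matrix.one_mul]
  rw [h] at e
  rw [Matrix.conjTranspose_nonsing_inv]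
  exact e

theorem trace_commutator_formula (A B : Matrix (Fin 3) (Fin 3) ℂ)
    (hA : IsSU21 A) (hB : IsSU21 B) (x y z t s : ℂ)
    (hx : x = A.trace) (hy : y = B.trace) (hz : z = (A * B).trace)
    (ht : t = (A * B⁻¹).trace) (hs : s = (A * B * A⁻¹ * B⁻¹).trace) :
    s + (starRingEnd ℂ) s =
      ((‖x‖ ^ 2 * ‖y‖ ^ 2 + ‖x‖ ^ 2 + ‖y‖ ^ 2 +
        ‖z‖ ^ 2 + ‖t‖ ^ 2 - 2 * (x * y * (starRingEnd ℂ) z).re -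
        2 * ((starRingEnd ℂ) x * y * t).re - 3 : ℝ) : ℂ) ∧
    2 * s.re =
      ‖x‖ ^ 2 * ‖y‖ ^ 2 + ‖x‖ ^ 2 + ‖y‖ ^ 2 +
        ‖z‖ ^ 2 + ‖t‖ ^ 2 - 2 * (x * y * (starRingEnd ℂ) z).re -
        2 * ((starRingEnd ℂ) x * y * t).re - 3 := by
  obtain ⟨hAdet, hAU⟩ := hA
  obtain ⟨hBdet, hBU⟩ := hB
  have hAdu : IsUnit A.det := by rw [hAdet]; exact isUnit_one
  have hBdu : IsUnit B.det := by rw [hBdet]; exact isUnit_one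
  -- adjugates equal inverses
  have hAadj : A.adjugate = A⁻¹ := by
    rw [Matrix.inv_def, hAdet]; simp
  have hBadj : B.adjugate = B⁻¹ := by
    rw [Matrix.inv_def, hBdet]; simp
  -- trace conjugation facts
  have hxc : A⁻¹.trace = (starRingEnd ℂ) x := by rw [hx]; exact U_trace_inv hAU
  have hyc : B⁻¹.trace = (starRingEnd ℂ) y := by rw [hy]; exact U_trace_inv hBU
  have hzc : (B⁻¹ * A⁻¹).trace = (starRingEnd ℂ) z := by
    rw [← Matrix.mul_inv_rev, hz]; exact U_trace_inv (U_mul hAU hBU)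
  have htc : (B * A⁻¹).trace = (starRingEnd ℂ) t := by
    have h1 : (A * B⁻¹)⁻¹ = B * A⁻¹ := by
      rw [Matrix.mul_inv_rev, Matrix.nonsing_inv_nonsing_inv _ hBdu]
    rw [← h1, ht]; exact U_trace_inv (U_mul hAU (U_inv hBU))
  have hsc : (B * A * B⁻¹ * A⁻¹).trace = (starRingEnd ℂ) s := by
    have h1 : (A * B * A⁻¹ * B⁻¹)⁻¹ = B * A * B⁻¹ * A⁻¹ := by
      rw [Matrix.mul_inv_rev, Matrix.mul_inv_rev, Matrix.mul_inv_rev,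
        Matrix.nonsing_inv_nonsing_inv _ hAdu, Matrix.nonsing_inv_nonsing_inv _ hBdu]
      simp only [Matrix.mul_assoc]
    rw [← h1, hs]
    exact U_trace_inv (U_mul (U_mul (U_mul hAU hBU) (U_inv hAU)) (U_inv hBU))
  -- the key identity
  have key := key_poly A B
  rw [hAadj, hBadj, hAdet, hBdet, hxc, hyc, hzc, htc, ← hx, ← hy, ← hz, ← ht,
    ← hs, hsc] at key
  -- translate the real right-hand side
  have habs : ∀ w : ℂ, ((‖w‖ : ℝ) : ℂ) ^ 2 = w * (starRingEnd ℂ) w := by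
    intro w
    rw [← Complex.ofReal_pow, Complex.sq_norm, Complex.mul_conj]
  have hre : ∀ w : ℂ, ((w.re : ℝ) : ℂ) = (w + (starRingEnd ℂ) w) / 2 := by
    intro w
    rw [Complex.add_conj]; push_cast; ring
  have main : s + (starRingEnd ℂ) s =
      ((‖x‖ ^ 2 * ‖y‖ ^ 2 + ‖x‖ ^ 2 + ‖y‖ ^ 2 +
        ‖z‖ ^ 2 + ‖t‖ ^ 2 - 2 * (x * y * (starRingEnd ℂ) z).re -
        2 * ((starRingEnd ℂ) x * y * t).re - 3 : ℝ) : ℂ) := by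
    push_cast
    rw [habs, habs, habs, habs, hre, hre]
    simp only [_root_.map_mul, Complex.conj_conj]
    linear_combination key
  refine ⟨main, ?_⟩
  have h2 := main
  rw [Complex.add_conj] at h2
  exact_mod_cast h2
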